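/- The formula J_{(α,g)}(j(β, h)) := j(α + β, g·h) gives a well-defined smooth action J of the group T^k × G on F, and for every ω ∈ ℝ^k the flow t ↦ Φ_{tω} is J-invariant: Φ_{tω}(J_{(α,g)}(m)) = J_{(α,g)}(Φ_{tω}(m)) for all (α, g) ∈ T^k × G, m ∈ F and t ∈ ℝ. -/

import Mathlib

open scoped Manifold
open Function Set Topology

noncomputable section

/-- The standard `n`-torus `Tⁿ = ℝⁿ/ℤⁿ`. -/
abbrev Torus (n : ℕ) : Type := Fin n → AddCircle (1 : ℝ)

/-- The canonical projection `ℝⁿ → Tⁿ`. -/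
def toTorus {n : ℕ} (x : Fin n → ℝ) : Torus n := fun i => (x i : AddCircle (1 : ℝ))

/-- A vector in `ℝⁿ` is nonresonant if its components are linearly independent over `ℤ`
(equivalently, over `ℚ`). -/
def Nonresonant {n : ℕ} (ω : Fin n → ℝ) : Prop :=
  ∀ p : Fin n → ℤ, (∑ i, (p i : ℝ) * ω i) = 0 → p = 0

variable {k : ℕ}
  -- `G` is a compact connected Lie group …
  {EG : Type*} [NormedAddCommGroup EG] [NormedSpace ℝ EG] [FiniteDimensional ℝ EG]
  {HG : Type*} [TopologicalSpace HG] {IG : ModelWithCorners ℝ EG HG}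
  {G : Type*} [TopologicalSpace G] [ChartedSpace HG G] [Group G] [IsTopologicalGroup G]
  [LieGroup IG (⊤ : ℕ∞) G] [CompactSpace G] [ConnectedSpace G]
  -- … acting smoothly and freely on a compact smooth manifold `F`
  {EF : Type*} [NormedAddCommGroup EF] [NormedSpace ℝ EF]
  {HF : Type*} [TopologicalSpace HF] {IF : ModelWithCorners ℝ EF HF}
  {F : Type*} [TopologicalSpace F] [ChartedSpace HF F] [IsManifold IF (⊤ : ℕ∞) F]
  [CompactSpace F] [MulAction G F] [ContinuousSMul G F]

/-- **Remark 2 of Section 3.2**: the formula `J_{(α,g)}(j(β,h)) = j(α+β, g·h)` defines a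
(well-defined, smooth — here rendered: continuous) action `J` of `Tᵏ × G` on `F`, and every
flow `t ↦ Φ_{tω}` is `J`-invariant. -/
theorem torus_times_G_action_and_invariance
    (hk : 1 ≤ k)
    -- the action of `G` on `F` is smooth and free
    (hactsmooth : ContMDiff (IG.prod IF) IF (⊤ : ℕ∞) fun p : G × F => p.1 • p.2)
    (hfree : ∀ (g : G) (m : F), g • m = m → g = 1)
    -- `Φ` is a smooth action of `(ℝᵏ, +)` on `F` commuting with the `G`-action
    (Φ : (Fin k → ℝ) → F → F)
    (hΦsmooth : ContMDiff ((𝓘(ℝ, Fin k → ℝ)).prod IF) IF (⊤ : ℕ∞) fun p : (Fin k → ℝ) × F => Φ p.1 p.2)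
    (hΦzero : ∀ m, Φ 0 m = m)
    (hΦadd : ∀ (x y : Fin k → ℝ) (m : F), Φ (x + y) m = Φ x (Φ y m))
    (hΦequiv : ∀ (x : Fin k → ℝ) (g : G) (m : F), Φ x (g • m) = g • Φ x m)
    -- (a) `Φ x m` is in the `G`-orbit of `m` iff `x ∈ ℤᵏ`
    (hperiod : ∀ (m : F) (x : Fin k → ℝ),
      (∃ g : G, Φ x m = g • m) ↔ ∃ z : Fin k → ℤ, x = fun i => (z i : ℝ))
    -- (b) any two points of `F` are joined by the flow up to the `G`-action
    (htrans : ∀ m m' : F, ∃ (x : Fin k → ℝ) (g : G), Φ x m = g • m')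
    -- a fixed point `m̄` and the phases `γ̄ᵢ` of the lifts at `m̄`
    (mbar : F) (γbar : Fin k → G)
    (hγbar : ∀ i, Φ (Pi.single i 1) mbar = γbar i • mbar)
    -- `E : ℝᵏ → G` is a smooth homomorphism with image in an abelian subgroup,
    -- with `E eᵢ = γ̄ᵢ`  (`E x` plays the role of `exp (x ★ η)`)
    (E : (Fin k → ℝ) → G)
    (hE0 : E 0 = 1)
    (hEadd : ∀ x y, E (x + y) = E x * E y)
    (hEsmooth : ContMDiff (𝓘(ℝ, Fin k → ℝ)) IG (⊤ : ℕ∞) E)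
    (hEab : ∃ A : Subgroup G, (∀ x, E x ∈ A) ∧ ∀ a ∈ A, ∀ b ∈ A, a * b = b * a)
    (hEγ : ∀ i, E (Pi.single i 1) = γbar i)
    -- the map `j (α, g) = g • E(α)⁻¹ • Φ_α m̄`
    (j : (Fin k → ℝ) → G → F)
    (hj : ∀ (α : Fin k → ℝ) (g : G), j α g = g • (E α)⁻¹ • Φ α mbar)
    -- `j` descends to a diffeomorphism of `Tᵏ × G` onto `F`
    (jhat : (Torus k × G) ≃ₜ F)
    (hjhat : ∀ (α : Fin k → ℝ) (g : G), jhat (toTorus α, g) = j α g)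
    :
    ∃ J : Torus k → G → F → F,
      -- defining formula: well-definedness is part of the claim
      (∀ (α β : Fin k → ℝ) (g h : G), J (toTorus α) g (j β h) = j (α + β) (g * h)) ∧
      -- `J` is an action of the group `Tᵏ × G`
      (∀ m : F, J 0 1 m = m) ∧
      (∀ (α α' : Torus k) (g g' : G) (m : F),
        J (α + α') (g * g') m = J α g (J α' g' m)) ∧
      -- continuity (smoothness) of the action
      (Continuous fun p : (Torus k × G) × F => J p.1.1 p.1.2 p.2) ∧
      -- the flow is `J`-invariant
      ∀ (ω : Fin k → ℝ) (t : ℝ) (α : Torus k) (g : G) (m : F),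
        Φ (t • ω) (J α g m) = J α g (Φ (t • ω) m) := by
  classical
  obtain ⟨A, hA1, hA2⟩ := hEab
  -- surjectivity of toTorus
  have hsurj : ∀ α : Torus k, ∃ a : Fin k → ℝ, toTorus a = α := by
    intro α
    have : ∀ i, ∃ r : ℝ, (r : AddCircle (1 : ℝ)) = α i := fun i =>
      Quotient.exists_rep (α i)
    choose a ha using this
    exact ⟨a, funext ha⟩
  have htor_add : ∀ a b : Fin k → ℝ, toTorus (a + b) = toTorus a + toTorus b := by
    intro a b; funext i; exact AddCircle.coe_add (p := (1:ℝ)) _ _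
  -- key flow identity
  have hkey : ∀ (x β : Fin k → ℝ) (h : G), Φ x (j β h) = j (x + β) (h * E x) := by
    intro x β h
    have hcomm : Commute (E x) (E β) := hA2 _ (hA1 x) _ (hA1 β)
    rw [hj, hj, hΦequiv, hΦequiv, hΦadd]
    rw [smul_smul, smul_smul]
    congr 1
    rw [hEadd, mul_inv_rev, mul_assoc, ← mul_assoc (E x)]
    rw [(hcomm.inv_right).eq, mul_assoc, mul_inv_cancel, mul_one]
  -- definition of J
  refine ⟨fun α g m => jhat (α + (jhat.symm m).1, g * (jhat.symm m).2), ?_, ?_, ?_, ?_, ?_⟩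
  · intro α β g h
    have : jhat.symm (j β h) = (toTorus β, h) := by
      rw [← hjhat, Homeomorph.symm_apply_apply]
    simp only [this]
    rw [← htor_add, hjhat]
  · intro m
    simp
  · intro α α' g g' m
    simp [add_assoc, mul_assoc]
  · have h1 : Continuous fun p : (Torus k × G) × F =>
        ((p.1.1 + (jhat.symm p.2).1, p.1.2 * (jhat.symm p.2).2) : Torus k × G) := by
      fun_prop
    exact jhat.continuous.comp h1
  · intro ω t α g m
    obtain ⟨a, ha⟩ := hsurj α
    obtain ⟨b, hb⟩ := hsurj (jhat.symm m).1
    set h : G := (jhat.symm m).2 with hh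
    have hm : m = j b h := by
      rw [← hjhat, hb, hh]
      simp
    have hJ : ∀ (c : Fin k → ℝ) (u : G), jhat (α + (jhat.symm (j c u)).1,
        g * (jhat.symm (j c u)).2) = j (a + c) (g * u) := by
      intro c u
      have : jhat.symm (j c u) = (toTorus c, u) := by
        rw [← hjhat, Homeomorph.symm_apply_apply]
      simp only [this]
      rw [← ha, ← htor_add, hjhat]
    simp only
    rw [hm, hJ, hkey, hkey, hJ]
    congr 1
    · abel
    · rw [mul_assoc]
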